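/- arXiv:2305.07966 — 3 statements merged into one kernel-verified Lean document; each statement's English description precedes it below -/
import Mathlib

section
/- Let X be a vector space and let A, C ∈ End(X)⟦z⟧ be formal power series of operators with zero constant term such that [A, ad_C^m(A)] = 0 for every m ≥ 0. Then e^{A+C} · e^{−C} = exp( ((e^{ad_C} − 1)/ad_C)(A) ), where (e^{ad_C} − 1)/ad_C denotes the operator ∑_{k≥0} ad_C^k/(k+1)!. -/
open PowerSeries

/-- Iterated adjoint action `ad_C^m(A)` on formal power series of operators,
where `ad_C(X) = CX − XC`. -/
noncomputable def adPow {R : Type*} [Ring R] (C : PowerSeries R) (m : ℕ)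
    (A : PowerSeries R) : PowerSeries R :=
  (fun X => C * X - X * C)^[m] A

/-- The exponential `exp(A) = ∑_{k≥0} A^k/k!` of a formal power series of operators
with zero constant term (defined coefficientwise; the sum is finite in each degree
since `A` has zero constant term). -/
noncomputable def expPS {R : Type*} [Ring R] [Algebra ℚ R] (A : PowerSeries R) :
    PowerSeries R :=
  PowerSeries.mk fun n =>
    ∑ k ∈ Finset.range (n + 1), (k.factorial : ℚ)⁻¹ • PowerSeries.coeff n (A ^ k)

/-- `((e^{ad_C} − 1)/ad_C)(A) = ∑_{k≥0} ad_C^k(A)/(k+1)!` (defined coefficientwise;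
the sum is finite in each degree since `A` and `C` have zero constant term). -/
noncomputable def expm1DivAd {R : Type*} [Ring R] [Algebra ℚ R]
    (C A : PowerSeries R) : PowerSeries R :=
  PowerSeries.mk fun n =>
    ∑ k ∈ Finset.range (n + 1),
      ((k + 1).factorial : ℚ)⁻¹ • PowerSeries.coeff n (adPow C k A)

namespace Stmt5

open Finset


variable {R : Type*} [Ring R]

/-- Formal derivative (noncommutative coefficients). -/
noncomputable def D (f : PowerSeries R) : PowerSeries R :=
  PowerSeries.mk fun n => (n + 1) • coeff (n + 1) f

@[simp] lemma coeff_D (f : PowerSeries R) (n : ℕ) :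
    coeff n (D f) = (n + 1) • coeff (n + 1) f := coeff_mk _ _

lemma D_add (f g : PowerSeries R) : D (f + g) = D f + D g := by
  ext n; simp [smul_add]

lemma D_mul (f g : PowerSeries R) : D (f * g) = D f * g + f * D g := by
  ext n
  rw [coeff_D, map_add, coeff_mul, coeff_mul, coeff_mul, smul_sum]
  have h1 : ∑ p ∈ Finset.HasAntidiagonal.antidiagonal n, coeff p.1 (D f) * coeff p.2 g
      = ∑ p ∈ Finset.HasAntidiagonal.antidiagonal (n+1), p.1 • (coeff p.1 f * coeff p.2 g) := by
    rw [Finset.Nat.antidiagonal_succ, Finset.sum_cons, Finset.sum_map]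
    rw [show ((0:ℕ), n+1).1 • (coeff ((0:ℕ), n+1).1 f * coeff ((0:ℕ),n+1).2 g) = 0 from
      zero_smul _ _, zero_add]
    refine Finset.sum_congr rfl fun p hp => ?_
    show coeff p.1 (D f) * coeff p.2 g = (p.1+1) • (coeff (p.1+1) f * coeff p.2 g)
    rw [coeff_D, smul_mul_assoc]
  have h2 : ∑ p ∈ Finset.HasAntidiagonal.antidiagonal n, coeff p.1 f * coeff p.2 (D g)
      = ∑ p ∈ Finset.HasAntidiagonal.antidiagonal (n+1), p.2 • (coeff p.1 f * coeff p.2 g) := by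
    rw [Finset.Nat.antidiagonal_succ', Finset.sum_cons, Finset.sum_map]
    rw [show (n+1, (0:ℕ)).2 • (coeff (n+1,(0:ℕ)).1 f * coeff (n+1,(0:ℕ)).2 g) = 0 from
      zero_smul _ _, zero_add]
    refine Finset.sum_congr rfl fun p hp => ?_
    show coeff p.1 f * coeff p.2 (D g) = (p.2+1) • (coeff p.1 f * coeff (p.2+1) g)
    rw [coeff_D, mul_smul_comm]
  rw [h1, h2, ← Finset.sum_add_distrib]
  refine Finset.sum_congr rfl fun p hp => ?_
  rw [Finset.HasAntidiagonal.mem_antidiagonal] at hp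
  rw [← add_smul, hp]

lemma coeff_pow_eq_zero {f : PowerSeries R} (hf : constantCoeff f = 0) :
    ∀ {n k : ℕ}, n < k → coeff n (f ^ k) = 0 := by
  intro n k
  induction k generalizing n with
  | zero => omega
  | succ k ih =>
    intro hn
    rw [pow_succ, coeff_mul]
    refine Finset.sum_eq_zero fun p hp => ?_
    rw [Finset.HasAntidiagonal.mem_antidiagonal] at hp
    rcases lt_or_ge p.1 k with h | h
    · rw [ih h, zero_mul]
    · have : p.2 = 0 := by omega
      have hp1 : p.1 = n := by omega
      rw [this, coeff_zero_eq_constantCoeff, hf, mul_zero]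


section Exp

variable [Algebra ℚ R]

noncomputable def Eexp (b : R) : PowerSeries R :=
  PowerSeries.mk fun n => (n.factorial : ℚ)⁻¹ • b ^ n

@[simp] lemma coeff_Eexp (b : R) (n : ℕ) :
    coeff n (Eexp b) = (n.factorial : ℚ)⁻¹ • b ^ n := coeff_mk _ _

lemma fact_smul_eq (n : ℕ) (x : R) :
    (n + 1) • (((n+1).factorial : ℚ)⁻¹ • x) = (n.factorial : ℚ)⁻¹ • x := by
  rw [← Nat.cast_smul_eq_nsmul ℚ, smul_smul]
  congr 1
  have h1 : (n.factorial : ℚ) ≠ 0 := by exact_mod_cast n.factorial_ne_zero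
  have h2 : ((n+1).factorial : ℚ) = (n+1) * n.factorial := by
    rw [Nat.factorial_succ]; push_cast; ring
  rw [h2]
  field_simp
  norm_num

lemma D_Eexp (b : R) : D (Eexp b) = Eexp b * PowerSeries.C b := by
  ext n
  rw [coeff_D, PowerSeries.coeff_mul_C, coeff_Eexp, coeff_Eexp, smul_mul_assoc, ← pow_succ,
    fact_smul_eq]

lemma D_Eexp' (b : R) : D (Eexp b) = PowerSeries.C b * Eexp b := by
  ext n
  rw [coeff_D, PowerSeries.coeff_C_mul, coeff_Eexp, coeff_Eexp, mul_smul_comm, ← pow_succ',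
    fact_smul_eq]

lemma Eexp_mul_Eexp {b b' : R} (h : Commute b b') : Eexp b * Eexp b' = Eexp (b + b') := by
  ext n
  rw [coeff_mul, coeff_Eexp, h.add_pow, Finset.Nat.sum_antidiagonal_eq_sum_range_succ_mk,
    Finset.smul_sum]
  refine Finset.sum_congr rfl fun k hk => ?_
  rw [Finset.mem_range, Nat.lt_succ_iff] at hk
  rw [coeff_Eexp, coeff_Eexp, smul_mul_assoc, mul_smul_comm, smul_smul,
    ← (Nat.cast_commute (n.choose k) (b ^ k * b' ^ (n - k))).eq, ← nsmul_eq_mul,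
    ← Nat.cast_smul_eq_nsmul ℚ, smul_smul]
  congr 1
  have key : ((n.choose k : ℕ) : ℚ) * k.factorial * (n - k).factorial = n.factorial := by
    exact_mod_cast congrArg (Nat.cast : ℕ → ℚ) (Nat.choose_mul_factorial_mul_factorial hk)
  have f1 : (k.factorial : ℚ) ≠ 0 := by exact_mod_cast k.factorial_ne_zero
  have f2 : ((n - k).factorial : ℚ) ≠ 0 := by exact_mod_cast (n - k).factorial_ne_zero
  have f3 : (n.factorial : ℚ) ≠ 0 := by exact_mod_cast n.factorial_ne_zero
  field_simp
  nlinarith [key]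

lemma Eexp_zero : Eexp (0 : R) = 1 := by
  ext n
  cases n with
  | zero => simp
  | succ n => simp [zero_pow]

lemma Eexp_neg_mul_Eexp (b : R) : Eexp (-b) * Eexp b = 1 := by
  rw [Eexp_mul_Eexp (Commute.refl b).neg_left, neg_add_cancel, Eexp_zero]

lemma Eexp_mul_Eexp_neg (b : R) : Eexp b * Eexp (-b) = 1 := by
  rw [Eexp_mul_Eexp (Commute.refl b).neg_right, add_neg_cancel, Eexp_zero]

lemma C_mul_Eexp_neg (c : R) :
    PowerSeries.C c * Eexp (-c) = Eexp (-c) * PowerSeries.C c := by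
  ext n
  rw [PowerSeries.coeff_C_mul, PowerSeries.coeff_mul_C, coeff_Eexp, mul_smul_comm,
    smul_mul_assoc]
  congr 1
  exact (((Commute.refl c).neg_right).pow_right n).eq

end Exp

section ExpPS

variable [Algebra ℚ R]

lemma coeff_expPS_of_le {f : PowerSeries R} (hf : constantCoeff f = 0) {n N : ℕ}
    (h : n ≤ N) :
    coeff n (expPS f) = ∑ k ∈ Finset.range (N + 1), (k.factorial : ℚ)⁻¹ • coeff n (f ^ k) := by
  rw [expPS, coeff_mk]
  refine Finset.sum_subset (Finset.range_subset_range.mpr (by omega)) fun k hk hk' => ?_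
  rw [Finset.mem_range] at hk hk'
  rw [coeff_pow_eq_zero hf (by omega), smul_zero]

lemma constantCoeff_expPS {f : PowerSeries R} : coeff 0 (expPS f) = 1 := by
  rw [expPS, coeff_mk]
  simp

lemma D_pow {f : PowerSeries R} (h : f * D f = D f * f) (k : ℕ) :
    D (f ^ (k + 1)) = (k + 1) • (f ^ k * D f) := by
  induction k with
  | zero => simp
  | succ k ih =>
    have hcomm : Commute f (D f) := h
    rw [pow_succ', D_mul, ih, mul_smul_comm, ← mul_assoc, ← pow_succ',
      (hcomm.symm.pow_right (k+1)).eq]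
    conv_rhs => rw [succ_nsmul]
    exact add_comm _ _

lemma D_expPS {f : PowerSeries R} (hf : constantCoeff f = 0) (h : f * D f = D f * f) :
    D (expPS f) = expPS f * D f := by
  ext m
  rw [coeff_D]
  have lhs1 : coeff (m+1) (expPS f)
      = ∑ k ∈ Finset.range (m + 2), (k.factorial : ℚ)⁻¹ • coeff (m+1) (f ^ k) := by
    rw [expPS, coeff_mk]
  rw [lhs1, smul_sum, Finset.sum_range_succ']
  have e0 : (m + 1) • (((0:ℕ).factorial : ℚ)⁻¹ • coeff (m+1) (f ^ 0)) = 0 := by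
    rw [pow_zero, PowerSeries.coeff_one, if_neg (by omega)]
    simp
  rw [e0, add_zero]
  have e1 : ∀ i ∈ Finset.range (m+1),
      (m + 1) • (((i+1).factorial : ℚ)⁻¹ • coeff (m+1) (f ^ (i+1)))
        = (i.factorial : ℚ)⁻¹ • coeff m (f ^ i * D f) := by
    intro i _
    have : (m + 1) • coeff (m+1) (f ^ (i+1)) = coeff m (D (f ^ (i+1))) := by
      rw [coeff_D]
    rw [smul_comm, this, D_pow h i, map_nsmul, smul_comm, fact_smul_eq]
  rw [Finset.sum_congr rfl e1, coeff_mul]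
  have e2 : ∀ p ∈ Finset.HasAntidiagonal.antidiagonal m, coeff p.1 (expPS f) * coeff p.2 (D f)
      = ∑ k ∈ Finset.range (m+1), (k.factorial : ℚ)⁻¹ • (coeff p.1 (f ^ k) * coeff p.2 (D f)) := by
    intro p hp
    rw [Finset.HasAntidiagonal.mem_antidiagonal] at hp
    rw [coeff_expPS_of_le hf (show p.1 ≤ m by omega), Finset.sum_mul]
    exact Finset.sum_congr rfl fun k _ => (smul_mul_assoc _ _ _)
  rw [Finset.sum_congr rfl e2, Finset.sum_comm]
  refine Finset.sum_congr rfl fun k _ => ?_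
  rw [coeff_mul, Finset.smul_sum]

lemma eq_of_D_eq {f g u : PowerSeries R} (hf : D f = f * u) (hg : D g = g * u)
    (h0 : coeff 0 f = coeff 0 g) : f = g := by
  ext n
  induction n using Nat.strong_induction_on with
  | _ n ih =>
    match n with
    | 0 => exact h0
    | n + 1 =>
      have h1 : (n+1) • coeff (n+1) f = (n+1) • coeff (n+1) g := by
        have hf' := congrArg (coeff n) hf
        have hg' := congrArg (coeff n) hg
        rw [coeff_D] at hf' hg'
        rw [hf', hg', coeff_mul, coeff_mul]
        refine Finset.sum_congr rfl fun p hp => ?_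
        rw [Finset.HasAntidiagonal.mem_antidiagonal] at hp
        rw [ih p.1 (by omega)]
      have h2 : ((n+1 : ℕ) : ℚ) • coeff (n+1) f = ((n+1 : ℕ) : ℚ) • coeff (n+1) g := by
        rw [Nat.cast_smul_eq_nsmul, Nat.cast_smul_eq_nsmul]; exact h1
      exact smul_right_injective R (by exact_mod_cast Nat.succ_ne_zero n) h2

end ExpPS

section Ad

/-- Iterated adjoint in an arbitrary ring. -/
def adP (c : R) (m : ℕ) (a : R) : R := (fun x => c * x - x * c)^[m] a

@[simp] lemma adP_zero (c a : R) : adP c 0 a = a := rfl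

lemma adP_succ (c a : R) (m : ℕ) :
    adP c (m + 1) a = c * adP c m a - adP c m a * c :=
  Function.iterate_succ_apply' _ _ _

lemma commute_adP {c a : R} (h : ∀ m, a * adP c m a = adP c m a * a) :
    ∀ i j, adP c i a * adP c j a = adP c j a * adP c i a := by
  intro i
  induction i with
  | zero => intro j; exact h j
  | succ i ih =>
    intro j
    have key1 : adP c (i+1) a * adP c j a + adP c i a * adP c (j+1) a
        = c * (adP c i a * adP c j a) - (adP c i a * adP c j a) * c := by
      rw [adP_succ, adP_succ]; noncomm_ring
    have key2 : adP c (j+1) a * adP c i a + adP c j a * adP c (i+1) a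
        = c * (adP c j a * adP c i a) - (adP c j a * adP c i a) * c := by
      rw [adP_succ, adP_succ]; noncomm_ring
    have h3 : adP c (i+1) a * adP c j a + adP c i a * adP c (j+1) a
        = adP c (j+1) a * adP c i a + adP c j a * adP c (i+1) a := by
      rw [key1, key2, ih j]
    rw [ih (j+1)] at h3
    rw [add_comm] at h3
    exact add_left_cancel h3

end Ad

section PartI

variable [Algebra ℚ R]

/-- `e^{t ad_c}(a)` as a power series in `t`. -/
noncomputable def uSer (c a : R) : PowerSeries R :=
  PowerSeries.mk fun k => (k.factorial : ℚ)⁻¹ • adP c k a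

/-- `((e^{t ad_c} - 1)/ad_c)(a)` as a power series in `t`. -/
noncomputable def gSer (c a : R) : PowerSeries R :=
  PowerSeries.mk fun k => if k = 0 then 0 else (k.factorial : ℚ)⁻¹ • adP c (k - 1) a

@[simp] lemma coeff_uSer (c a : R) (k : ℕ) :
    coeff k (uSer c a) = (k.factorial : ℚ)⁻¹ • adP c k a := coeff_mk _ _

@[simp] lemma constantCoeff_gSer (c a : R) : constantCoeff (gSer c a) = 0 := by
  rw [← coeff_zero_eq_constantCoeff, gSer, coeff_mk]; simp

lemma coeff_gSer_succ (c a : R) (k : ℕ) :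
    coeff (k + 1) (gSer c a) = ((k+1).factorial : ℚ)⁻¹ • adP c k a := by
  rw [gSer, coeff_mk, if_neg (Nat.succ_ne_zero k), Nat.add_sub_cancel]

lemma D_gSer (c a : R) : D (gSer c a) = uSer c a := by
  ext k
  rw [coeff_D, coeff_uSer, coeff_gSer_succ, fact_smul_eq]

/-- Uniqueness for the ODE `D f = v * f - f * v`. -/
lemma eq_of_D_eq_ad {f g v : PowerSeries R}
    (hf : D f = v * f - f * v) (hg : D g = v * g - g * v)
    (h0 : coeff 0 f = coeff 0 g) : f = g := by
  ext n
  induction n using Nat.strong_induction_on with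
  | _ n ih =>
    match n with
    | 0 => exact h0
    | n + 1 =>
      have h1 : (n+1) • coeff (n+1) f = (n+1) • coeff (n+1) g := by
        have hf' := congrArg (coeff n) hf
        have hg' := congrArg (coeff n) hg
        rw [coeff_D] at hf' hg'
        rw [hf', hg', map_sub, map_sub, coeff_mul, coeff_mul, coeff_mul, coeff_mul]
        congr 1
        · refine Finset.sum_congr rfl fun p hp => ?_
          rw [Finset.HasAntidiagonal.mem_antidiagonal] at hp
          rw [ih p.2 (by omega)]
        · refine Finset.sum_congr rfl fun p hp => ?_
          rw [Finset.HasAntidiagonal.mem_antidiagonal] at hp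
          rw [ih p.1 (by omega)]
      have h2 : ((n+1 : ℕ) : ℚ) • coeff (n+1) f = ((n+1 : ℕ) : ℚ) • coeff (n+1) g := by
        rw [Nat.cast_smul_eq_nsmul, Nat.cast_smul_eq_nsmul]; exact h1
      exact smul_right_injective R (by exact_mod_cast Nat.succ_ne_zero n) h2

lemma D_uSer (c a : R) :
    D (uSer c a) = PowerSeries.C c * uSer c a - uSer c a * PowerSeries.C c := by
  ext k
  simp only [coeff_D, map_sub, PowerSeries.coeff_C_mul, PowerSeries.coeff_mul_C, coeff_uSer]
  rw [fact_smul_eq, adP_succ, smul_sub, mul_smul_comm, smul_mul_assoc]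

lemma conj_eq_uSer (c a : R) :
    Eexp c * PowerSeries.C a * Eexp (-c) = uSer c a := by
  have hw : D (Eexp c * PowerSeries.C a * Eexp (-c))
      = PowerSeries.C c * (Eexp c * PowerSeries.C a * Eexp (-c))
        - (Eexp c * PowerSeries.C a * Eexp (-c)) * PowerSeries.C c := by
    have hDC : D (PowerSeries.C a) = 0 := by
      ext k; rw [coeff_D, PowerSeries.coeff_C, if_neg (Nat.succ_ne_zero k)]; simp
    rw [D_mul, D_mul, hDC, mul_zero, add_zero, D_Eexp' c, D_Eexp (-c), map_neg, mul_neg]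
    noncomm_ring
  refine eq_of_D_eq_ad hw (D_uSer c a) ?_
  have : constantCoeff (Eexp c * PowerSeries.C a * Eexp (-c)) = a := by
    simp [Eexp]
  have h0u : coeff 0 (uSer c a) = a := by simp
  rw [h0u, coeff_zero_eq_constantCoeff, this]

lemma gSer_mul_uSer_comm {c a : R} (h : ∀ m, a * adP c m a = adP c m a * a) :
    gSer c a * uSer c a = uSer c a * gSer c a := by
  have hterm : ∀ i j, coeff i (gSer c a) * coeff j (uSer c a)
      = coeff j (uSer c a) * coeff i (gSer c a) := by
    intro i j
    match i with
    | 0 => rw [coeff_zero_eq_constantCoeff, constantCoeff_gSer]; rw [zero_mul, mul_zero]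
    | i + 1 =>
      rw [coeff_gSer_succ, coeff_uSer, smul_mul_smul_comm, smul_mul_smul_comm,
        commute_adP h i j, mul_comm ((i+1).factorial : ℚ)⁻¹]
  ext n
  rw [coeff_mul, coeff_mul]
  conv_lhs => rw [← Finset.HasAntidiagonal.map_swap_antidiagonal]
  rw [Finset.sum_map]
  exact Finset.sum_congr rfl fun p hp => hterm p.2 p.1

/-- Part I : the BCH-type identity as power series in an auxiliary variable `t`. -/
theorem partI {c a : R} (h : ∀ m, a * adP c m a = adP c m a * a) :
    Eexp (a + c) * Eexp (-c) = expPS (gSer c a) := by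
  set u := uSer c a with hu
  set Φ := Eexp (a + c) * Eexp (-c) with hΦ
  have hDΦ : D Φ = Φ * u := by
    rw [hΦ, D_mul, D_Eexp (a + c), D_Eexp (-c), map_neg, mul_neg, map_add]
    have h1 : PowerSeries.C a * Eexp (-c) = Eexp (-c) * u := by
      have := congrArg (fun z => Eexp (-c) * z) (conj_eq_uSer c a)
      simpa [← mul_assoc, Eexp_neg_mul_Eexp] using this
    calc Eexp (a+c) * (PowerSeries.C a + PowerSeries.C c) * Eexp (-c)
          + Eexp (a+c) * -(Eexp (-c) * PowerSeries.C c)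
        = Eexp (a+c) * (PowerSeries.C a * Eexp (-c))
          + (Eexp (a+c) * (PowerSeries.C c * Eexp (-c))
             - Eexp (a+c) * (Eexp (-c) * PowerSeries.C c)) := by noncomm_ring
      _ = Eexp (a+c) * (Eexp (-c) * u) := by
            rw [C_mul_Eexp_neg c, sub_self, add_zero, h1]
      _ = Φ * u := by rw [hΦ, mul_assoc]
  have hDΨ : D (expPS (gSer c a)) = expPS (gSer c a) * u := by
    rw [D_expPS (constantCoeff_gSer c a) (by rw [D_gSer, gSer_mul_uSer_comm h, ← D_gSer]),
      D_gSer]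
  refine eq_of_D_eq hDΦ hDΨ ?_
  rw [constantCoeff_expPS, coeff_zero_eq_constantCoeff, map_mul]
  simp [Eexp]

end PartI

section PartII

variable [Algebra ℚ R]

/-- Summing the `t`-coefficients ("evaluation at `t = 1`"). -/
noncomputable def Lmap (f : PowerSeries (PowerSeries R)) : PowerSeries R :=
  PowerSeries.mk fun n =>
    ∑ m ∈ Finset.range (n + 1), coeff n (coeff m f)

/-- Admissibility: the `t^m`-coefficient has `z`-order at least `m`. -/
def Adm (f : PowerSeries (PowerSeries R)) : Prop :=
  ∀ ⦃m n : ℕ⦄, n < m → coeff n (coeff m f) = 0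

lemma coeff_Lmap (f : PowerSeries (PowerSeries R)) (n : ℕ) :
    coeff n (Lmap f) = ∑ m ∈ Finset.range (n + 1), coeff n (coeff m f) :=
  coeff_mk _ _

lemma coeff_Lmap_of_le {f : PowerSeries (PowerSeries R)} (hf : Adm f) {n N : ℕ} (h : n ≤ N) :
    coeff n (Lmap f) = ∑ m ∈ Finset.range (N + 1), coeff n (coeff m f) := by
  rw [coeff_Lmap]
  refine Finset.sum_subset (Finset.range_subset_range.mpr (by omega)) fun m hm hm' => ?_
  rw [Finset.mem_range] at hm hm'
  exact hf (by omega)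

lemma coeff_mul_adm_zero {f g : PowerSeries (PowerSeries R)} (hf : Adm f) (hg : Adm g)
    {i j n : ℕ} (h : n < i + j) :
    coeff n (coeff i f * coeff j g) = 0 := by
  rw [coeff_mul]
  refine Finset.sum_eq_zero fun p hp => ?_
  rw [Finset.HasAntidiagonal.mem_antidiagonal] at hp
  rcases lt_or_ge p.1 i with h1 | h1
  · rw [hf h1, zero_mul]
  · rw [hg (show p.2 < j by omega), mul_zero]

lemma adm_mul {f g : PowerSeries (PowerSeries R)} (hf : Adm f) (hg : Adm g) : Adm (f * g) := by
  intro m n h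
  rw [coeff_mul, map_sum]
  refine Finset.sum_eq_zero fun p hp => ?_
  rw [Finset.HasAntidiagonal.mem_antidiagonal] at hp
  exact coeff_mul_adm_zero hf hg (by omega)

lemma triangle_sum {M : Type*} [AddCommMonoid M] (n : ℕ) (H : ℕ → ℕ → M)
    (h0 : ∀ i j, n < i + j → H i j = 0) :
    ∑ m ∈ Finset.range (n + 1), ∑ p ∈ Finset.HasAntidiagonal.antidiagonal m, H p.1 p.2
      = ∑ i ∈ Finset.range (n + 1), ∑ j ∈ Finset.range (n + 1), H i j := by
  rw [← Finset.sum_product']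
  rw [← Finset.sum_biUnion (by
    intro x hx y hy hxy
    refine Finset.disjoint_left.mpr fun p hp hp' => ?_
    rw [Finset.HasAntidiagonal.mem_antidiagonal] at hp hp'
    exact hxy (hp ▸ hp'))]
  refine Finset.sum_subset ?_ ?_
  · intro p hp
    rw [Finset.mem_biUnion] at hp
    obtain ⟨m, hm, hp⟩ := hp
    rw [Finset.mem_range] at hm
    rw [Finset.HasAntidiagonal.mem_antidiagonal] at hp
    rw [Finset.mem_product, Finset.mem_range, Finset.mem_range]
    omega
  · intro p hp hp'
    refine h0 p.1 p.2 ?_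
    by_contra hle
    exact hp' (Finset.mem_biUnion.mpr ⟨p.1 + p.2,
      Finset.mem_range.mpr (by omega), Finset.HasAntidiagonal.mem_antidiagonal.mpr rfl⟩)

lemma Lmap_mul {f g : PowerSeries (PowerSeries R)} (hf : Adm f) (hg : Adm g) :
    Lmap (f * g) = Lmap f * Lmap g := by
  ext n
  rw [coeff_Lmap, coeff_mul]
  have lhs : ∑ m ∈ Finset.range (n + 1), coeff n (coeff m (f * g))
      = ∑ i ∈ Finset.range (n + 1), ∑ j ∈ Finset.range (n + 1),
          coeff n (coeff i f * coeff j g) := by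
    calc ∑ m ∈ Finset.range (n + 1), coeff n (coeff m (f * g))
        = ∑ m ∈ Finset.range (n + 1), ∑ p ∈ Finset.HasAntidiagonal.antidiagonal m,
            coeff n (coeff p.1 f * coeff p.2 g) := by
          refine Finset.sum_congr rfl fun m _ => ?_
          rw [coeff_mul, map_sum]
      _ = _ := triangle_sum n
            (fun i j => coeff n (coeff i f * coeff j g))
            (fun i j h => coeff_mul_adm_zero hf hg h)
  rw [lhs]
  have rhs : ∀ p ∈ Finset.HasAntidiagonal.antidiagonal n,
      coeff p.1 (Lmap f) * coeff p.2 (Lmap g)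
        = ∑ i ∈ Finset.range (n + 1), ∑ j ∈ Finset.range (n + 1),
            coeff p.1 (coeff i f) * coeff p.2 (coeff j g) := by
    intro p hp
    rw [Finset.HasAntidiagonal.mem_antidiagonal] at hp
    rw [coeff_Lmap_of_le hf (show p.1 ≤ n by omega),
      coeff_Lmap_of_le hg (show p.2 ≤ n by omega), Finset.sum_mul_sum]
  rw [Finset.sum_congr rfl rhs,
    Finset.sum_comm (s := Finset.HasAntidiagonal.antidiagonal n) (t := Finset.range (n + 1))]
  refine Finset.sum_congr rfl fun i _ => ?_
  rw [Finset.sum_comm (s := Finset.HasAntidiagonal.antidiagonal n) (t := Finset.range (n + 1))]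
  refine Finset.sum_congr rfl fun j _ => ?_
  rw [coeff_mul]

lemma adm_pow {g : PowerSeries (PowerSeries R)} (hg : Adm g) : ∀ k, Adm (g ^ (k + 1))
  | 0 => by rw [pow_one]; exact hg
  | k + 1 => by rw [pow_succ]; exact adm_mul (adm_pow hg k) hg

lemma Lmap_pow {g : PowerSeries (PowerSeries R)} (hg : Adm g) (k : ℕ) :
    Lmap (g ^ k) = Lmap g ^ k := by
  induction k with
  | zero =>
    rw [pow_zero, pow_zero]
    ext n
    rw [coeff_Lmap]
    rw [Finset.sum_eq_single 0 (fun m _ hm => by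
        rw [PowerSeries.coeff_one, if_neg hm, map_zero])
      (fun h => absurd (Finset.mem_range.mpr (by omega)) h)]
    rw [PowerSeries.coeff_one, if_pos rfl]
  | succ k ih =>
    match k with
    | 0 => rw [pow_one, pow_one]
    | k + 1 =>
      rw [pow_succ, Lmap_mul (adm_pow hg k) hg, ih, ← pow_succ]

lemma Lmap_expPS {g : PowerSeries (PowerSeries R)} (hg : Adm g)
    (h0 : constantCoeff g = 0) :
    Lmap (expPS g) = expPS (Lmap g) := by
  ext n
  rw [coeff_Lmap]
  have step1 : ∀ m ∈ Finset.range (n + 1),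
      coeff n (coeff m (expPS g))
        = ∑ k ∈ Finset.range (n + 1),
            (k.factorial : ℚ)⁻¹ • coeff n (coeff m (g ^ k)) := by
    intro m hm
    rw [Finset.mem_range] at hm
    rw [expPS, coeff_mk, map_sum]
    have e : ∀ k ∈ Finset.range (m + 1),
        coeff n ((k.factorial : ℚ)⁻¹ • coeff m (g ^ k))
          = (k.factorial : ℚ)⁻¹ • coeff n (coeff m (g ^ k)) := by
      intro k _
      rw [PowerSeries.coeff_smul]
    rw [Finset.sum_congr rfl e]
    refine Finset.sum_subset (Finset.range_subset_range.mpr (by omega)) fun k hk hk' => ?_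
    rw [Finset.mem_range] at hk hk'
    rw [coeff_pow_eq_zero h0 (show m < k by omega), map_zero, smul_zero]
  rw [Finset.sum_congr rfl step1, Finset.sum_comm, expPS, coeff_mk]
  refine Finset.sum_congr rfl fun k hk => ?_
  rw [← Finset.smul_sum, ← coeff_Lmap, Lmap_pow hg]

lemma adm_Eexp {b : PowerSeries R} (hb : constantCoeff b = 0) : Adm (Eexp b) := by
  intro m n h
  rw [coeff_Eexp, PowerSeries.coeff_smul, coeff_pow_eq_zero hb h, smul_zero]

lemma Lmap_Eexp (b : PowerSeries R) : Lmap (Eexp b) = expPS b := by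
  ext n
  rw [coeff_Lmap, expPS, coeff_mk]
  refine Finset.sum_congr rfl fun m _ => ?_
  rw [coeff_Eexp, PowerSeries.coeff_smul]

lemma coeff_adP_eq_zero {A C : PowerSeries R} (hA : constantCoeff A = 0)
    (hC : constantCoeff C = 0) : ∀ k n, n ≤ k → coeff n (adP C k A) = 0 := by
  intro k
  induction k with
  | zero =>
    intro n hn
    interval_cases n
    rw [adP_zero, coeff_zero_eq_constantCoeff]
    exact hA
  | succ k ih =>
    intro n hn
    rw [adP_succ, map_sub, coeff_mul, coeff_mul]
    have e1 : ∀ p ∈ Finset.HasAntidiagonal.antidiagonal n, coeff p.1 C * coeff p.2 (adP C k A) = 0 := by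
      intro p hp
      rw [Finset.HasAntidiagonal.mem_antidiagonal] at hp
      rcases le_or_gt p.2 k with h2 | h2
      · rw [ih p.2 h2, mul_zero]
      · have : p.1 = 0 := by omega
        rw [this, coeff_zero_eq_constantCoeff, hC, zero_mul]
    have e2 : ∀ p ∈ Finset.HasAntidiagonal.antidiagonal n, coeff p.1 (adP C k A) * coeff p.2 C = 0 := by
      intro p hp
      rw [Finset.HasAntidiagonal.mem_antidiagonal] at hp
      rcases le_or_gt p.1 k with h2 | h2
      · rw [ih p.1 h2, zero_mul]
      · have : p.2 = 0 := by omega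
        rw [this, coeff_zero_eq_constantCoeff, hC, mul_zero]
    rw [Finset.sum_eq_zero e1, Finset.sum_eq_zero e2, sub_zero]

lemma adm_gSer {A C : PowerSeries R} (hA : constantCoeff A = 0)
    (hC : constantCoeff C = 0) : Adm (gSer C A) := by
  intro m n h
  match m with
  | 0 => omega
  | m + 1 =>
    rw [coeff_gSer_succ, PowerSeries.coeff_smul,
      coeff_adP_eq_zero hA hC m n (by omega), smul_zero]

lemma Lmap_gSer {A C : PowerSeries R} (hA : constantCoeff A = 0)
    (hC : constantCoeff C = 0) : Lmap (gSer C A) = expm1DivAd C A := by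
  ext n
  rw [coeff_Lmap, expm1DivAd, coeff_mk, Finset.sum_range_succ', Finset.sum_range_succ]
  have e0 : coeff n (coeff 0 (gSer C A)) = 0 := by
    rw [coeff_zero_eq_constantCoeff, constantCoeff_gSer, map_zero]
  have elast : ((n + 1).factorial : ℚ)⁻¹ • coeff n (adPow C n A) = 0 := by
    rw [show adPow C n A = adP C n A from rfl, coeff_adP_eq_zero hA hC n n le_rfl, smul_zero]
  rw [e0, add_zero, elast, add_zero]
  refine Finset.sum_congr rfl fun i _ => ?_
  rw [coeff_gSer_succ, PowerSeries.coeff_smul,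
    show (i + 1).factorial = (i.factorial * (i+1)) from by
      rw [Nat.factorial_succ]; ring]
  rfl

end PartII

end Stmt5

/-- Let `X` be a (rational) vector space and `A, C ∈ End(X)⟦z⟧`
formal power series of operators with zero constant term such that
`[A, ad_C^m(A)] = 0` for every `m ≥ 0`.  Then
`e^{A+C} · e^{−C} = exp( ((e^{ad_C} − 1)/ad_C)(A) )`. -/
theorem exp_sum_mul_exp_neg {V : Type*} [AddCommGroup V] [Module ℚ V]
    (A C : PowerSeries (Module.End ℚ V))
    (hA : PowerSeries.constantCoeff A = 0)
    (hC : PowerSeries.constantCoeff C = 0)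
    (hcomm : ∀ m : ℕ, A * adPow C m A = adPow C m A * A) :
    expPS (A + C) * expPS (-C) = expPS (expm1DivAd C A) := by
  have hAC : PowerSeries.constantCoeff (A + C) = 0 := by rw [map_add, hA, hC, add_zero]
  have hnC : PowerSeries.constantCoeff (-C) = 0 := by rw [map_neg, hC, neg_zero]
  have hadm1 : Stmt5.Adm (Stmt5.Eexp (A + C)) := Stmt5.adm_Eexp hAC
  have hadm2 : Stmt5.Adm (Stmt5.Eexp (-C)) := Stmt5.adm_Eexp hnC
  have h := Stmt5.partI (c := C) (a := A) (fun m => hcomm m)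
  calc expPS (A + C) * expPS (-C)
      = Stmt5.Lmap (Stmt5.Eexp (A + C)) * Stmt5.Lmap (Stmt5.Eexp (-C)) := by
        rw [Stmt5.Lmap_Eexp, Stmt5.Lmap_Eexp]
    _ = Stmt5.Lmap (Stmt5.Eexp (A + C) * Stmt5.Eexp (-C)) := (Stmt5.Lmap_mul hadm1 hadm2).symm
    _ = Stmt5.Lmap (expPS (Stmt5.gSer C A)) := by rw [h]
    _ = expPS (Stmt5.Lmap (Stmt5.gSer C A)) :=
        Stmt5.Lmap_expPS (Stmt5.adm_gSer hA hC) (Stmt5.constantCoeff_gSer C A)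
    _ = expPS (expm1DivAd C A) := by rw [Stmt5.Lmap_gSer hA hC]
end

section
/- Let X be a vector space and let A₁, A₂, C ∈ End(X)⟦z⟧ be formal power series of operators with zero constant term such that [ad_C^ℓ(A_i), ad_C^m(A_j)] = 0 for all i, j ∈ {1,2} and all ℓ, m ≥ 0. Then e^{A₁+C} · e^{−C} · e^{A₂+C} = e^{A₁+A₂+C}. -/
set_option linter.unusedSectionVars false
set_option linter.unusedVariables false

open PowerSeries Finset

section Basic
variable {R : Type*} [Ring R] [Algebra ℚ R]

/-- general iterated ad in a ring -/
noncomputable def adp {R : Type*} [Ring R] (C : R) (m : ℕ) (A : R) : R :=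
  (fun X => C * X - X * C)^[m] A

lemma adp_succ {C A : R} (m : ℕ) :
    adp C (m+1) A = C * adp C m A - adp C m A * C := by
  simp [adp, Function.iterate_succ_apply']

lemma adp_zero (C A : R) : adp C 0 A = A := rfl

lemma adp_add (C A B : R) (m : ℕ) : adp C m (A + B) = adp C m A + adp C m B := by
  induction m with
  | zero => rfl
  | succ m ih => rw [adp_succ, adp_succ, adp_succ, ih]; noncomm_ring

lemma coeff_pow_eq_zero {f : PowerSeries R} (hf : constantCoeff f = 0) :
    ∀ {k n : ℕ}, n < k → (coeff n) (f ^ k) = 0 := by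
  intro k
  induction k with
  | zero => intro n hn; omega
  | succ k ih =>
    intro n hn
    rw [pow_succ, coeff_mul]
    apply Finset.sum_eq_zero
    rintro ⟨i, j⟩ hij
    rw [Finset.HasAntidiagonal.mem_antidiagonal] at hij
    by_cases h : i < k
    · rw [ih h, zero_mul]
    · have hj : j = 0 := by omega
      have hi : i = k := by omega
      subst hj
      rw [coeff_zero_eq_constantCoeff, hf, mul_zero]

lemma coeff_expPS (f : PowerSeries R) (n : ℕ) :
    coeff n (expPS f) = ∑ k ∈ Finset.range (n + 1), (k.factorial : ℚ)⁻¹ • coeff n (f ^ k) := by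
  simp [expPS]

lemma constantCoeff_expPS {f : PowerSeries R} (hf : constantCoeff f = 0) :
    constantCoeff (expPS f) = 1 := by
  rw [← coeff_zero_eq_constantCoeff, coeff_expPS]
  simp

end Basic

section MulExt
variable {R : Type*} [Ring R] [Algebra ℚ R]

/-- `coeff n (expPS f * b)` written as a finite sum. -/
lemma coeff_expPS_mul {f : PowerSeries R} (hf : constantCoeff f = 0)
    (b : PowerSeries R) (n : ℕ) :
    coeff n (expPS f * b)
      = ∑ k ∈ Finset.range (n + 1), (k.factorial : ℚ)⁻¹ • coeff n (f ^ k * b) := by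
  rw [coeff_mul]
  have : ∀ p ∈ antidiagonal n, coeff p.1 (expPS f) * coeff p.2 b
      = ∑ k ∈ Finset.range (n+1), (k.factorial : ℚ)⁻¹ • (coeff p.1 (f ^ k) * coeff p.2 b) := by
    rintro ⟨i, j⟩ hij
    rw [Finset.HasAntidiagonal.mem_antidiagonal] at hij
    rw [coeff_expPS, Finset.sum_mul]
    simp only [smul_mul_assoc]
    apply Finset.sum_subset
    · intro k hk; rw [Finset.mem_range] at *; omega
    · intro k hk hk'
      rw [Finset.mem_range, not_lt] at *
      rw [coeff_pow_eq_zero hf (by omega), zero_mul, smul_zero]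
  rw [Finset.sum_congr rfl this, Finset.sum_comm]
  apply Finset.sum_congr rfl
  intro k hk
  rw [coeff_mul, Finset.smul_sum]

/-- `coeff n (b * expPS f)` written as a finite sum. -/
lemma coeff_mul_expPS {f : PowerSeries R} (hf : constantCoeff f = 0)
    (b : PowerSeries R) (n : ℕ) :
    coeff n (b * expPS f)
      = ∑ k ∈ Finset.range (n + 1), (k.factorial : ℚ)⁻¹ • coeff n (b * f ^ k) := by
  rw [coeff_mul]
  have : ∀ p ∈ antidiagonal n, coeff p.1 b * coeff p.2 (expPS f)
      = ∑ k ∈ Finset.range (n+1), (k.factorial : ℚ)⁻¹ • (coeff p.1 b * coeff p.2 (f ^ k)) := by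
    rintro ⟨i, j⟩ hij
    rw [Finset.HasAntidiagonal.mem_antidiagonal] at hij
    rw [coeff_expPS, Finset.mul_sum]
    simp only [mul_smul_comm]
    apply Finset.sum_subset
    · intro k hk; rw [Finset.mem_range] at *; omega
    · intro k hk hk'
      rw [Finset.mem_range, not_lt] at *
      rw [coeff_pow_eq_zero hf (by omega), mul_zero, smul_zero]
  rw [Finset.sum_congr rfl this, Finset.sum_comm]
  apply Finset.sum_congr rfl
  intro k hk
  rw [coeff_mul, Finset.smul_sum]

end MulExt

section ExpAdd
variable {R : Type*} [Ring R] [Algebra ℚ R]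

lemma sum_antidiag_range {M : Type*} [AddCommMonoid M] (n : ℕ) (F : ℕ → ℕ → M)
    (hF : ∀ i j, n < i + j → F i j = 0) :
    ∑ k ∈ range (n+1), ∑ p ∈ antidiagonal k, F p.1 p.2
      = ∑ i ∈ range (n+1), ∑ j ∈ range (n+1), F i j := by
  have hD : (range (n+1)).biUnion (fun k => antidiagonal k)
      = (range (n+1) ×ˢ range (n+1)).filter (fun p => p.1 + p.2 ≤ n) := by
    ext ⟨i, j⟩
    simp only [Finset.mem_biUnion, Finset.mem_range, Finset.HasAntidiagonal.mem_antidiagonal,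
      Finset.mem_filter, Finset.mem_product]
    constructor
    · rintro ⟨k, hk, rfl⟩; omega
    · rintro ⟨⟨hi, hj⟩, hij⟩; exact ⟨i + j, by omega, rfl⟩
  rw [← Finset.sum_biUnion, hD]
  · rw [← Finset.sum_product']
    apply Finset.sum_subset (Finset.filter_subset _ _)
    intro ⟨i, j⟩ hp hp'
    simp only [Finset.mem_filter, Finset.mem_product, Finset.mem_range, not_and, not_le] at hp hp'
    exact hF i j (hp' hp)
  · intro a ha b hb hab
    simp only [Finset.disjoint_left, Finset.mem_coe, Finset.HasAntidiagonal.mem_antidiagonal]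
    intro p hp hq
    exact hab (by omega)

lemma coeff_pow_mul_pow_eq_zero {f g : PowerSeries R}
    (hf : constantCoeff f = 0) (hg : constantCoeff g = 0)
    {i j n : ℕ} (h : n < i + j) : coeff n (f ^ i * g ^ j) = 0 := by
  rw [coeff_mul]
  apply Finset.sum_eq_zero
  rintro ⟨a, b⟩ hab
  rw [Finset.HasAntidiagonal.mem_antidiagonal] at hab
  by_cases ha : a < i
  · rw [coeff_pow_eq_zero hf ha, zero_mul]
  · rw [coeff_pow_eq_zero hg (by omega), mul_zero]

lemma inv_factorial_choose {i j k : ℕ} (h : i + j = k) :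
    ((k.factorial : ℚ))⁻¹ * (k.choose i : ℚ) = (i.factorial : ℚ)⁻¹ * (j.factorial : ℚ)⁻¹ := by
  subst h
  rw [Nat.cast_choose ℚ (Nat.le_add_right i j)]
  have h1 : (i.factorial : ℚ) ≠ 0 := Nat.cast_ne_zero.mpr i.factorial_ne_zero
  have h2 : (j.factorial : ℚ) ≠ 0 := Nat.cast_ne_zero.mpr j.factorial_ne_zero
  have h3 : ((i+j).factorial : ℚ) ≠ 0 := Nat.cast_ne_zero.mpr (i+j).factorial_ne_zero
  rw [Nat.add_sub_cancel_left]
  field_simp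

lemma expPS_add {f g : PowerSeries R} (hf : constantCoeff f = 0)
    (hg : constantCoeff g = 0) (h : Commute f g) :
    expPS (f + g) = expPS f * expPS g := by
  ext n
  rw [coeff_expPS, coeff_expPS_mul hf]
  have lhs : ∀ k ∈ range (n+1), (k.factorial : ℚ)⁻¹ • coeff n ((f + g) ^ k)
      = ∑ p ∈ antidiagonal k,
          ((p.1.factorial : ℚ)⁻¹ * (p.2.factorial : ℚ)⁻¹) • coeff n (f ^ p.1 * g ^ p.2) := by
    intro k hk
    rw [h.add_pow', map_sum, Finset.smul_sum]
    apply Finset.sum_congr rfl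
    rintro ⟨i, j⟩ hij
    rw [Finset.HasAntidiagonal.mem_antidiagonal] at hij
    rw [map_nsmul, ← Nat.cast_smul_eq_nsmul ℚ, smul_smul, inv_factorial_choose hij]
  rw [Finset.sum_congr rfl lhs,
    sum_antidiag_range n
      (fun i j => ((i.factorial : ℚ)⁻¹ * (j.factorial : ℚ)⁻¹) • coeff n (f ^ i * g ^ j))
      (fun i j hij => by beta_reduce; rw [coeff_pow_mul_pow_eq_zero hf hg hij, smul_zero])]
  apply Finset.sum_congr rfl
  intro i hi
  rw [coeff_mul_expPS hg, Finset.smul_sum]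
  apply Finset.sum_congr rfl
  intro j hj
  rw [smul_smul]

lemma expPS_zero : expPS (0 : PowerSeries R) = 1 := by
  ext n
  rw [coeff_expPS]
  rcases Nat.eq_zero_or_pos n with rfl | hn
  · simp
  · rw [Finset.sum_eq_zero, coeff_one, if_neg (by omega)]
    intro k hk
    rcases Nat.eq_zero_or_pos k with rfl | hkpos
    · rw [pow_zero, coeff_one, if_neg (by omega), smul_zero]
    · rw [zero_pow (by omega), map_zero, smul_zero]

end ExpAdd

section Deriv
variable {R : Type*} [Ring R] [Algebra ℚ R]

noncomputable def Dps {R : Type*} [Ring R] (f : PowerSeries R) : PowerSeries R :=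
  PowerSeries.mk fun n => (n + 1) • coeff (n + 1) f

lemma coeff_Dps (f : PowerSeries R) (n : ℕ) :
    coeff n (Dps f) = (n + 1) • coeff (n + 1) f := by simp [Dps]

lemma Dps_one : Dps (1 : PowerSeries R) = 0 := by
  ext n
  rw [coeff_Dps, coeff_one, if_neg (by omega)]
  simp

lemma Dps_mul (f g : PowerSeries R) : Dps (f * g) = Dps f * g + f * Dps g := by
  ext n
  rw [map_add, coeff_Dps, coeff_mul, coeff_mul, coeff_mul,
    Finset.Nat.sum_antidiagonal_eq_sum_range_succ_mk,
    Finset.Nat.sum_antidiagonal_eq_sum_range_succ_mk,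
    Finset.Nat.sum_antidiagonal_eq_sum_range_succ_mk]
  simp only [coeff_Dps]
  -- LHS : (n+1) • ∑_{i ∈ range (n+2)} f_i g_{n+1-i}
  -- RHS : ∑_{i ∈ range (n+1)} ((i+1) • f_{i+1}) * g_{n-i} + ∑_{i ∈ range (n+1)} f_i * ((n-i+1) • g_{n-i+1})
  have e1 : ∑ i ∈ Finset.range (n+1), ((i+1) • coeff (i+1) f) * coeff (n-i) g
      = ∑ i ∈ Finset.range (n+2), i • (coeff i f * coeff (n+1-i) g) := by
    rw [Finset.sum_range_succ' (fun i => i • (coeff i f * coeff (n+1-i) g)) (n+1)]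
    simp only [zero_smul, add_zero]
    apply Finset.sum_congr rfl
    intro i hi
    rw [Finset.mem_range] at hi
    have hh : n + 1 - (i + 1) = n - i := by omega
    rw [hh, smul_mul_assoc]
  have e2 : ∑ i ∈ Finset.range (n+1), coeff i f * ((n-i+1) • coeff (n-i+1) g)
      = ∑ i ∈ Finset.range (n+2), (n+1-i) • (coeff i f * coeff (n+1-i) g) := by
    rw [Finset.sum_range_succ (fun i => (n+1-i) • (coeff i f * coeff (n+1-i) g)) (n+1)]
    simp only [Nat.sub_self, zero_smul, add_zero]
    apply Finset.sum_congr rfl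
    intro i hi
    rw [Finset.mem_range] at hi
    have hh : n + 1 - i = n - i + 1 := by omega
    rw [hh, mul_smul_comm]
  rw [e1, e2, ← Finset.sum_add_distrib, Finset.smul_sum]
  apply Finset.sum_congr rfl
  intro i hi
  rw [Finset.mem_range] at hi
  rw [← add_smul]
  congr 1
  omega

lemma Dps_pow {f : PowerSeries R} (h : Commute f (Dps f)) (k : ℕ) :
    Dps (f ^ (k+1)) = (k+1) • (Dps f * f ^ k) := by
  induction k with
  | zero => simp [Dps_mul, Dps_one]
  | succ k ih =>
    rw [pow_succ, Dps_mul, ih, smul_mul_assoc, mul_assoc, ← pow_succ,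
      ((h.symm.pow_right (k+1)).symm.eq : f ^ (k+1) * Dps f = Dps f * f ^ (k+1))]
    rw [succ_nsmul (Dps f * f ^ (k+1)) (k+1)]

lemma Dps_expPS {f : PowerSeries R} (hf : constantCoeff f = 0)
    (h : Commute f (Dps f)) : Dps (expPS f) = Dps f * expPS f := by
  ext n
  rw [coeff_Dps, coeff_expPS, Finset.smul_sum, coeff_mul_expPS hf]
  rw [Finset.sum_range_succ' (fun k => (n+1) • ((k.factorial : ℚ)⁻¹ • coeff (n+1) (f ^ k))) (n+1)]
  have h0 : (n+1) • ((Nat.factorial 0 : ℚ)⁻¹ • coeff (n+1) (f ^ 0)) = 0 := by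
    rw [pow_zero, coeff_one, if_neg (by omega)]
    simp
  rw [h0, add_zero]
  apply Finset.sum_congr rfl
  intro k hk
  have : (n+1) • coeff (n+1) (f ^ (k+1)) = coeff n (Dps (f ^ (k+1))) := by
    rw [coeff_Dps]
  rw [smul_comm, this, Dps_pow h, map_nsmul, ← Nat.cast_smul_eq_nsmul ℚ, smul_smul]
  congr 1
  have h1 : ((k+1 : ℕ).factorial : ℚ) ≠ 0 := Nat.cast_ne_zero.mpr (k+1).factorial_ne_zero
  rw [Nat.factorial_succ]
  push_cast
  field_simp

end Deriv

section Expt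
variable {R : Type*} [Ring R] [Algebra ℚ R]

/-- `e^{tX}` as a power series in `t` with coefficients in `R`. -/
noncomputable def expt (X : R) : PowerSeries R :=
  PowerSeries.mk fun n => (n.factorial : ℚ)⁻¹ • X ^ n

lemma coeff_expt (X : R) (n : ℕ) :
    coeff n (expt X) = (n.factorial : ℚ)⁻¹ • X ^ n := by simp [expt]

lemma coeff_zero_expt (X : R) : coeff 0 (expt X) = 1 := by simp [expt]

lemma Dps_expt (X : R) : Dps (expt X) = C X * expt X := by
  ext n
  rw [coeff_Dps, coeff_expt, coeff_C_mul, coeff_expt, ← Nat.cast_smul_eq_nsmul ℚ,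
    smul_smul, mul_smul_comm, pow_succ']
  congr 1
  have h1 : ((n+1 : ℕ).factorial : ℚ) ≠ 0 := Nat.cast_ne_zero.mpr (n+1).factorial_ne_zero
  rw [Nat.factorial_succ]
  push_cast
  field_simp

lemma expt_add {X Y : R} (h : Commute X Y) : expt (X + Y) = expt X * expt Y := by
  ext n
  rw [coeff_mul, coeff_expt, h.add_pow', Finset.smul_sum]
  apply Finset.sum_congr rfl
  rintro ⟨i, j⟩ hij
  rw [Finset.HasAntidiagonal.mem_antidiagonal] at hij
  rw [coeff_expt, coeff_expt, smul_mul_assoc, mul_smul_comm, smul_smul,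
    ← Nat.cast_smul_eq_nsmul ℚ, smul_smul, inv_factorial_choose hij]

lemma expt_zero : expt (0 : R) = 1 := by
  ext n
  rw [coeff_expt, coeff_one]
  rcases Nat.eq_zero_or_pos n with rfl | hn
  · simp
  · rw [if_neg (by omega), zero_pow (by omega), smul_zero]

lemma nsmul_cancel {M : Type*} [AddCommGroup M] [Module ℚ M] {x y : M} (n : ℕ)
    (h : (n+1) • x = (n+1) • y) : x = y := by
  rw [← Nat.cast_smul_eq_nsmul ℚ, ← Nat.cast_smul_eq_nsmul ℚ] at h
  have hn : ((n+1 : ℕ) : ℚ) ≠ 0 := by positivity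
  calc x = (((n+1:ℕ):ℚ))⁻¹ • ((((n+1:ℕ)):ℚ) • x) := by
            rw [smul_smul, inv_mul_cancel₀ hn, one_smul]
    _ = (((n+1:ℕ):ℚ))⁻¹ • ((((n+1:ℕ)):ℚ) • y) := by rw [h]
    _ = y := by rw [smul_smul, inv_mul_cancel₀ hn, one_smul]

lemma ode_unique {P f g : PowerSeries R} (hf : Dps f = P * f) (hg : Dps g = P * g)
    (h0 : coeff 0 f = coeff 0 g) : f = g := by
  ext n
  induction n using Nat.strong_induction_on with
  | _ n ih =>
    match n with
    | 0 => exact h0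
    | n+1 =>
      apply nsmul_cancel n
      have h1 : (n+1) • coeff (n+1) f = coeff n (P * f) := by rw [← coeff_Dps, hf]
      have h2 : (n+1) • coeff (n+1) g = coeff n (P * g) := by rw [← coeff_Dps, hg]
      rw [h1, h2, coeff_mul, coeff_mul]
      apply Finset.sum_congr rfl
      rintro ⟨i, j⟩ hij
      rw [Finset.HasAntidiagonal.mem_antidiagonal] at hij
      rw [ih j (by omega)]

lemma commute_of_coeff {f g : PowerSeries R}
    (h : ∀ i j, Commute (coeff i f) (coeff j g)) : Commute f g := by
  show f * g = g * f
  ext n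
  rw [coeff_mul, coeff_mul, Finset.Nat.sum_antidiagonal_eq_sum_range_succ_mk,
      Finset.Nat.sum_antidiagonal_eq_sum_range_succ_mk,
      ← Finset.sum_range_reflect (fun i => coeff i g * coeff (n-i) f) (n+1)]
  apply Finset.sum_congr rfl
  intro i hi
  rw [Finset.mem_range] at hi
  have h1 : n + 1 - 1 - i = n - i := by omega
  have h2 : n - (n - i) = i := by omega
  rw [h1, h2]
  exact (h i (n-i)).eq

/-- key normal ordering: `e^f g = (g + [f,g]) e^f` when `[f,[f,g]] = 0`. -/
lemma expPS_mul_comm {f g w : PowerSeries R} (hf : constantCoeff f = 0)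
    (hw : f * g - g * f = w) (hcw : Commute f w) :
    expPS f * g = (g + w) * expPS f := by
  have hw0 : constantCoeff w = 0 := by
    rw [← hw, map_sub, map_mul, map_mul, hf, zero_mul, mul_zero, sub_zero]
  have hfg : f * g = g * f + w := by rw [← hw]; abel
  have key : ∀ k : ℕ, f ^ (k+1) * g = g * f ^ (k+1) + (k+1) • (w * f ^ k) := by
    intro k
    induction k with
    | zero => simpa using hfg
    | succ k ih =>
      rw [pow_succ' f (k+1), mul_assoc, ih, mul_add, ← mul_assoc, hfg, add_mul, mul_assoc,
        ← pow_succ', mul_smul_comm, ← mul_assoc, hcw.eq, mul_assoc, ← pow_succ']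
      rw [succ_nsmul (w * f ^ (k+1)) (k+1)]
      abel
  ext n
  rw [coeff_expPS_mul hf, add_mul, map_add, coeff_mul_expPS hf, coeff_mul_expPS hf]
  rw [Finset.sum_range_succ' (fun k => (k.factorial : ℚ)⁻¹ • coeff n (f ^ k * g)) n,
      Finset.sum_range_succ' (fun k => (k.factorial : ℚ)⁻¹ • coeff n (g * f ^ k)) n,
      Finset.sum_range_succ (fun k => (k.factorial : ℚ)⁻¹ • coeff n (w * f ^ k)) n]
  have hlast : ((n.factorial : ℚ))⁻¹ • coeff n (w * f ^ n) = 0 := by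
    rw [show w * f ^ n = w ^ 1 * f ^ n by rw [pow_one],
      coeff_pow_mul_pow_eq_zero hw0 hf (by omega), smul_zero]
  rw [hlast, add_zero]
  simp only [pow_zero, mul_one, one_mul, Nat.factorial_zero, Nat.cast_one, inv_one, one_smul]
  have hsum : ∑ k ∈ Finset.range n, (((k+1).factorial : ℚ))⁻¹ • coeff n (f ^ (k+1) * g)
      = ∑ k ∈ Finset.range n, ((((k+1).factorial : ℚ))⁻¹ • coeff n (g * f ^ (k+1))
          + ((k.factorial : ℚ))⁻¹ • coeff n (w * f ^ k)) := by
    apply Finset.sum_congr rfl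
    intro k hk
    rw [key k, map_add, smul_add, map_nsmul, ← Nat.cast_smul_eq_nsmul ℚ, smul_smul]
    congr 2
    have h1 : ((k+1 : ℕ).factorial : ℚ) ≠ 0 := Nat.cast_ne_zero.mpr (k+1).factorial_ne_zero
    rw [Nat.factorial_succ]
    push_cast
    field_simp
  rw [hsum, Finset.sum_add_distrib]
  abel

end Expt

section Core
variable {R : Type*} [Ring R] [Algebra ℚ R]

/-- `u(t) = ∑_{m≥0} t^{m+1} ad_c^m(a)/(m+1)!`. -/
noncomputable def Useries (c a : R) : PowerSeries R :=
  PowerSeries.mk fun n => match n with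
  | 0 => 0
  | m+1 => (((m+1).factorial : ℚ))⁻¹ • adp c m a

/-- `w(t) = [u(t), c] = -∑_{m≥0} t^{m+1} ad_c^{m+1}(a)/(m+1)!`. -/
noncomputable def Wseries (c a : R) : PowerSeries R :=
  PowerSeries.mk fun n => match n with
  | 0 => 0
  | m+1 => -((((m+1).factorial : ℚ))⁻¹ • adp c (m+1) a)

@[simp] lemma coeff_U_zero (c a : R) : coeff 0 (Useries c a) = 0 := by
  simp [Useries]

@[simp] lemma coeff_U_succ (c a : R) (m : ℕ) :
    coeff (m+1) (Useries c a) = (((m+1).factorial : ℚ))⁻¹ • adp c m a := by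
  simp [Useries]

@[simp] lemma coeff_W_zero (c a : R) : coeff 0 (Wseries c a) = 0 := by
  simp [Wseries]

@[simp] lemma coeff_W_succ (c a : R) (m : ℕ) :
    coeff (m+1) (Wseries c a) = -((((m+1).factorial : ℚ))⁻¹ • adp c (m+1) a) := by
  simp [Wseries]

lemma constantCoeff_U (c a : R) : constantCoeff (Useries c a) = 0 := by
  rw [← coeff_zero_eq_constantCoeff]; simp

lemma Useries_add (c a b : R) : Useries c (a + b) = Useries c a + Useries c b := by
  ext n
  match n with
  | 0 => rw [map_add, coeff_U_zero, coeff_U_zero, coeff_U_zero, add_zero]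
  | m+1 => simp [adp_add, smul_add]

lemma commute_U_coeff {c a b : R} (h : ∀ l m, Commute (adp c l a) (adp c m b)) :
    Commute (Useries c a) (Useries c b) := by
  apply commute_of_coeff
  intro i j
  match i, j with
  | 0, j => rw [coeff_U_zero]; exact Commute.zero_left _
  | i+1, 0 => rw [coeff_U_zero]; exact Commute.zero_right _
  | i+1, j+1 =>
    rw [coeff_U_succ, coeff_U_succ]
    exact ((h i j).smul_left _).smul_right _

lemma commute_U_DpsU {c a : R} (h : ∀ l m, Commute (adp c l a) (adp c m a)) :
    Commute (Useries c a) (Dps (Useries c a)) := by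
  apply commute_of_coeff
  intro i j
  rw [coeff_Dps]
  match i with
  | 0 => rw [coeff_U_zero]; exact Commute.zero_left _
  | i+1 =>
    rw [coeff_U_succ, coeff_U_succ]
    exact (((h i j).smul_left _).smul_right _).smul_right _

lemma commute_U_W {c a : R} (h : ∀ l m, Commute (adp c l a) (adp c m a)) :
    Commute (Useries c a) (Wseries c a) := by
  apply commute_of_coeff
  intro i j
  match i, j with
  | 0, j => rw [coeff_U_zero]; exact Commute.zero_left _
  | i+1, 0 => rw [coeff_W_zero]; exact Commute.zero_right _
  | i+1, j+1 =>
    rw [coeff_U_succ, coeff_W_succ]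
    exact (((h i (j+1)).smul_left _).smul_right _).neg_right

/-- `[u, C c] = w`. -/
lemma U_bracket (c a : R) :
    Useries c a * PowerSeries.C c - PowerSeries.C c * Useries c a = Wseries c a := by
  ext n
  rw [map_sub, coeff_mul_C, coeff_C_mul]
  match n with
  | 0 => simp
  | m+1 =>
    rw [coeff_U_succ, coeff_W_succ, smul_mul_assoc, mul_smul_comm, ← smul_sub, adp_succ]
    rw [← smul_neg]
    congr 1
    abel

/-- `u' + w = C a`. -/
lemma DpsU_add_W (c a : R) :
    Dps (Useries c a) + Wseries c a = PowerSeries.C a := by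
  ext n
  rw [map_add, coeff_Dps]
  match n with
  | 0 =>
    rw [coeff_W_zero, coeff_U_succ, coeff_C]
    simp [adp_zero]
  | m+1 =>
    rw [coeff_W_succ, coeff_U_succ, coeff_C, if_neg (by omega)]
    rw [← Nat.cast_smul_eq_nsmul ℚ, smul_smul]
    have h1 : (((m+2 : ℕ)).factorial : ℚ) ≠ 0 := Nat.cast_ne_zero.mpr (m+2).factorial_ne_zero
    have : ((m + 1 + 1 : ℕ) : ℚ) * (((m+1+1 : ℕ).factorial : ℚ))⁻¹
        = (((m+1 : ℕ).factorial : ℚ))⁻¹ := by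
      rw [Nat.factorial_succ (m+1)]
      have h2 : (((m+1 : ℕ)).factorial : ℚ) ≠ 0 := Nat.cast_ne_zero.mpr (m+1).factorial_ne_zero
      push_cast
      field_simp
    rw [this]
    abel

/-- **Core identity**: `e^{t(a+c)} = e^{u(t)} e^{tc}`. -/
theorem core_identity (c a : R) (h : ∀ l m, Commute (adp c l a) (adp c m a)) :
    expt (a + c) = expPS (Useries c a) * expt c := by
  apply ode_unique (P := PowerSeries.C (a + c)) (Dps_expt _)
  · -- derivative of the RHS
    rw [Dps_mul, Dps_expPS (constantCoeff_U c a) (commute_U_DpsU h), Dps_expt]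
    have hbr := expPS_mul_comm (constantCoeff_U c a) (U_bracket c a) (commute_U_W h)
    calc Dps (Useries c a) * expPS (Useries c a) * expt c
          + expPS (Useries c a) * (PowerSeries.C c * expt c)
        = Dps (Useries c a) * expPS (Useries c a) * expt c
          + (expPS (Useries c a) * PowerSeries.C c) * expt c := by
            congr 1
            rw [mul_assoc]
      _ = Dps (Useries c a) * expPS (Useries c a) * expt c
          + ((PowerSeries.C c + Wseries c a) * expPS (Useries c a)) * expt c := by rw [hbr]
      _ = ((Dps (Useries c a) + Wseries c a) + PowerSeries.C c)
            * (expPS (Useries c a) * expt c) := by noncomm_ring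
      _ = PowerSeries.C (a + c) * (expPS (Useries c a) * expt c) := by
            rw [DpsU_add_W, map_add]
  · have hz : coeff 0 (expPS (Useries c a) * expt c)
        = coeff 0 (expPS (Useries c a)) * coeff 0 (expt c) := by
      rw [coeff_mul]
      simp
    rw [coeff_zero_expt, hz, coeff_zero_expt, mul_one, coeff_zero_eq_constantCoeff,
      constantCoeff_expPS (constantCoeff_U c a)]

/-- merged identity at the level of `t`-series. -/
theorem core_merge (c a₁ a₂ : R)
    (h11 : ∀ l m, Commute (adp c l a₁) (adp c m a₁))
    (h22 : ∀ l m, Commute (adp c l a₂) (adp c m a₂))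
    (h12 : ∀ l m, Commute (adp c l a₁) (adp c m a₂)) :
    expt (a₁ + c) * expt (-c) * expt (a₂ + c) = expt (a₁ + a₂ + c) := by
  have h1212 : ∀ l m, Commute (adp c l (a₁ + a₂)) (adp c m (a₁ + a₂)) := by
    intro l m
    rw [adp_add, adp_add]
    exact ((h11 l m).add_right (h12 l m)).add_left
      (((h12 m l).symm.add_right (h22 l m)))
  rw [core_identity c a₁ h11, core_identity c a₂ h22, core_identity c (a₁ + a₂) h1212,
    Useries_add]
  rw [expPS_add (constantCoeff_U c a₁) (constantCoeff_U c a₂) (commute_U_coeff h12)]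
  have hcc : expt c * expt (-c) = 1 := by
    rw [← expt_add (Commute.neg_right (Commute.refl c)), add_neg_cancel, expt_zero]
  calc expPS (Useries c a₁) * expt c * expt (-c) * (expPS (Useries c a₂) * expt c)
      = expPS (Useries c a₁) * (expt c * expt (-c)) * (expPS (Useries c a₂) * expt c) := by
        noncomm_ring
    _ = expPS (Useries c a₁) * expPS (Useries c a₂) * expt c := by
        rw [hcc, mul_one, ← mul_assoc]

end Core

section Eval
variable {S : Type*} [Ring S] [Algebra ℚ S]

/-- Evaluation of a `t`-power series of `z`-power series at `t = 1`
(meaningful on admissible series). -/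
noncomputable def Eval (F : PowerSeries (PowerSeries S)) : PowerSeries S :=
  PowerSeries.mk fun n =>
    ∑ k ∈ Finset.range (n+1), coeff n (coeff k F)

/-- `F` is admissible: the `t^k`-coefficient has `z`-order at least `k`. -/
def Adm (F : PowerSeries (PowerSeries S)) : Prop :=
  ∀ k n : ℕ, n < k → coeff n (coeff k F) = 0

lemma coeff_Eval (F : PowerSeries (PowerSeries S)) (n : ℕ) :
    coeff n (Eval F) = ∑ k ∈ Finset.range (n+1), coeff n (coeff k F) := by
  simp [Eval]

lemma coeff_Eval_ext {F : PowerSeries (PowerSeries S)} (hF : Adm F) {a n : ℕ} (h : a < n+1) :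
    coeff a (Eval F) = ∑ i ∈ Finset.range (n+1), coeff a (coeff i F) := by
  rw [coeff_Eval]
  apply Finset.sum_subset
  · intro i hi
    rw [Finset.mem_range] at *
    omega
  · intro i hi hi'
    rw [Finset.mem_range] at hi hi'
    exact hF i a (by omega)

lemma adm_vanish {F G : PowerSeries (PowerSeries S)} (hF : Adm F) (hG : Adm G)
    {i j n : ℕ} (h : n < i + j) :
    coeff n (coeff i F * coeff j G) = 0 := by
  rw [coeff_mul]
  apply Finset.sum_eq_zero
  rintro ⟨a, b⟩ hab
  rw [Finset.HasAntidiagonal.mem_antidiagonal] at hab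
  by_cases ha : a < i
  · rw [hF i a ha, zero_mul]
  · rw [hG j b (by omega), mul_zero]

lemma Adm_mul {F G : PowerSeries (PowerSeries S)} (hF : Adm F) (hG : Adm G) :
    Adm (F * G) := by
  intro k n h
  rw [coeff_mul, map_sum]
  apply Finset.sum_eq_zero
  rintro ⟨i, j⟩ hij
  rw [Finset.HasAntidiagonal.mem_antidiagonal] at hij
  exact adm_vanish hF hG (by omega)

lemma Eval_mul {F G : PowerSeries (PowerSeries S)} (hF : Adm F) (hG : Adm G) :
    Eval (F * G) = Eval F * Eval G := by
  ext n
  rw [coeff_Eval, coeff_mul]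
  have step1 : ∀ k ∈ Finset.range (n+1), coeff n (coeff k (F * G))
      = ∑ p ∈ antidiagonal k,
          coeff n (coeff p.1 F * coeff p.2 G) := by
    intro k hk
    rw [coeff_mul, map_sum]
  rw [Finset.sum_congr rfl step1,
    sum_antidiag_range n
      (fun i j => coeff n (coeff i F * coeff j G))
      (fun i j hij => adm_vanish hF hG hij),
    Finset.Nat.sum_antidiagonal_eq_sum_range_succ_mk]
  have step2 : ∀ a ∈ Finset.range (n+1),
      coeff a (Eval F) * coeff (n-a) (Eval G)
      = ∑ i ∈ Finset.range (n+1), ∑ j ∈ Finset.range (n+1),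
          coeff a (coeff i F) * coeff (n-a) (coeff j G) := by
    intro a ha
    rw [Finset.mem_range] at ha
    rw [coeff_Eval_ext hF (n := n) (by omega), coeff_Eval_ext hG (n := n) (by omega),
      Finset.sum_mul_sum]
  rw [Finset.sum_congr rfl step2]
  conv_rhs => rw [Finset.sum_comm]
  apply Finset.sum_congr rfl
  intro i hi
  conv_rhs => rw [Finset.sum_comm]
  apply Finset.sum_congr rfl
  intro j hj
  rw [coeff_mul, Finset.Nat.sum_antidiagonal_eq_sum_range_succ_mk]

lemma Adm_expt {X : PowerSeries S} (hX : constantCoeff X = 0) : Adm (expt X) := by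
  intro k n h
  rw [coeff_expt, PowerSeries.coeff_smul, coeff_pow_eq_zero hX h, smul_zero]

lemma Eval_expt {X : PowerSeries S} (hX : constantCoeff X = 0) :
    Eval (expt X) = expPS X := by
  ext n
  rw [coeff_Eval, coeff_expPS]
  apply Finset.sum_congr rfl
  intro k hk
  rw [coeff_expt, PowerSeries.coeff_smul]

end Eval

/-- Let `X` be a (rational) vector space and `A₁, A₂, C ∈ End(X)⟦z⟧`
formal power series of operators with zero constant term such that
`[ad_C^ℓ(A_i), ad_C^m(A_j)] = 0` for all `i, j ∈ {1,2}` and all `ℓ, m ≥ 0`.  Then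
`e^{A₁+C} · e^{−C} · e^{A₂+C} = e^{A₁+A₂+C}`. -/
theorem exp_merge {V : Type*} [AddCommGroup V] [Module ℚ V]
    (A₁ A₂ C : PowerSeries (Module.End ℚ V))
    (hA₁ : PowerSeries.constantCoeff A₁ = 0)
    (hA₂ : PowerSeries.constantCoeff A₂ = 0)
    (hC : PowerSeries.constantCoeff C = 0)
    (hcomm : ∀ B ∈ ({A₁, A₂} : Set (PowerSeries (Module.End ℚ V))),
      ∀ B' ∈ ({A₁, A₂} : Set (PowerSeries (Module.End ℚ V))),
        ∀ l m : ℕ, Commute (adPow C l B) (adPow C m B')) :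
    expPS (A₁ + C) * expPS (-C) * expPS (A₂ + C) = expPS (A₁ + A₂ + C) := by
  have key : ∀ B ∈ ({A₁, A₂} : Set (PowerSeries (Module.End ℚ V))),
      ∀ B' ∈ ({A₁, A₂} : Set (PowerSeries (Module.End ℚ V))),
        ∀ l m : ℕ, Commute (adp C l B) (adp C m B') := hcomm
  have hm1 : A₁ ∈ ({A₁, A₂} : Set (PowerSeries (Module.End ℚ V))) := Set.mem_insert _ _
  have hm2 : A₂ ∈ ({A₁, A₂} : Set (PowerSeries (Module.End ℚ V))) :=
    Set.mem_insert_of_mem _ rfl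
  have h11 := fun l m => key A₁ hm1 A₁ hm1 l m
  have h22 := fun l m => key A₂ hm2 A₂ hm2 l m
  have h12 := fun l m => key A₁ hm1 A₂ hm2 l m
  have tmerge := core_merge C A₁ A₂ h11 h22 h12
  have hc1 : constantCoeff (A₁ + C) = 0 := by rw [map_add, hA₁, hC, add_zero]
  have hc2 : constantCoeff (-C) = 0 := by rw [map_neg, hC, neg_zero]
  have hc3 : constantCoeff (A₂ + C) = 0 := by rw [map_add, hA₂, hC, add_zero]
  have hc4 : constantCoeff (A₁ + A₂ + C) = 0 := by
    rw [map_add, map_add, hA₁, hA₂, hC, add_zero, add_zero]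
  calc expPS (A₁ + C) * expPS (-C) * expPS (A₂ + C)
      = Eval (expt (A₁ + C)) * Eval (expt (-C)) * Eval (expt (A₂ + C)) := by
        rw [Eval_expt hc1, Eval_expt hc2, Eval_expt hc3]
    _ = Eval (expt (A₁ + C) * expt (-C) * expt (A₂ + C)) := by
        rw [Eval_mul (Adm_mul (Adm_expt hc1) (Adm_expt hc2)) (Adm_expt hc3),
          Eval_mul (Adm_expt hc1) (Adm_expt hc2)]
    _ = Eval (expt (A₁ + A₂ + C)) := by rw [tmerge]
    _ = expPS (A₁ + A₂ + C) := Eval_expt hc4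
end

section
/- With Y_{ℓ,k} = [u^ℓ](Γ + uY)^{ℓ+k} defined as the sum of all words with ℓ letters Y and k letters Γ in an associative algebra, the following holds for 1 ≤ m ≤ ℓ: Y_{ℓ,k} = ∑_{i=0}^{k} Y_{m−1,i} · Y · Y_{ℓ−m, k−i}. -/
open Polynomial

/-- `YwordN Γ Y ℓ k = [u^ℓ] (Γ + u·Y)^{ℓ+k}`, i.e. the sum of all words with `ℓ`
letters `Y` and `k` letters `Γ` (the polynomial variable `u` is central). -/
noncomputable def YwordN {R : Type*} [Ring R] (Γ Y : R) (l k : ℕ) : R :=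
  ((C Γ + X * C Y) ^ (l + k)).coeff l

section
variable {R : Type*} [Ring R] (Γ Y : R)

lemma coeff_mul_succ (Q : R[X]) (n : ℕ) :
    ((C Γ + X * C Y) * Q).coeff (n+1) = Γ * Q.coeff (n+1) + Y * Q.coeff n := by
  rw [add_mul, coeff_add, coeff_C_mul, mul_assoc, coeff_X_mul, coeff_C_mul]

lemma Yrec (l k : ℕ) :
    YwordN Γ Y (l+1) (k+1) = Γ * YwordN Γ Y (l+1) k + Y * YwordN Γ Y l (k+1) := by
  unfold YwordN
  have h : (l+1) + (k+1) = ((l+1) + k) + 1 := by omega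
  have h2 : l + 1 + k = l + (k + 1) := by omega
  rw [h, pow_succ', coeff_mul_succ, h2]

lemma Y00 : YwordN Γ Y 0 0 = 1 := by simp [YwordN]

lemma Yrec0 (k : ℕ) : YwordN Γ Y 0 (k+1) = Γ * YwordN Γ Y 0 k := by
  unfold YwordN
  rw [show 0 + (k+1) = (0+k) + 1 by omega, pow_succ', mul_coeff_zero]
  simp

lemma YrecL (l : ℕ) : YwordN Γ Y (l+1) 0 = Y * YwordN Γ Y l 0 := by
  unfold YwordN
  rw [show (l+1) + 0 = l + 1 by omega, pow_succ', coeff_mul_succ]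
  have hd : ((C Γ + X * C Y : R[X]) ^ l).natDegree < l + 1 := by
    calc ((C Γ + X * C Y : R[X]) ^ l).natDegree ≤ l * (C Γ + X * C Y : R[X]).natDegree :=
          natDegree_pow_le
    _ ≤ l * 1 := by
        gcongr
        compute_degree
    _ < l + 1 := by omega
  rw [coeff_eq_zero_of_natDegree_lt hd]
  simp [l.add_zero]

lemma Ysplit1 (l : ℕ) : ∀ k, YwordN Γ Y (l+1) k =
    ∑ i ∈ Finset.range (k + 1), YwordN Γ Y 0 i * Y * YwordN Γ Y l (k - i) := by
  intro k
  induction k with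
  | zero => simp [YrecL, Y00]
  | succ k ih =>
    rw [Finset.sum_range_succ', Yrec, ih, Finset.mul_sum]
    simp only [Nat.succ_sub_succ, Y00, Yrec0, one_mul, Nat.sub_zero, mul_assoc]

lemma Yl0 : ∀ l, YwordN Γ Y l 0 = Y ^ l := by
  intro l
  induction l with
  | zero => simpa using Y00 Γ Y
  | succ l ih => rw [YrecL, ih]; exact (pow_succ' Y l).symm

end

theorem Yword_split_aux {R : Type*} [Ring R] (Γ Y : R) (l k m : ℕ)
    (hm1 : 1 ≤ m) (hml : m ≤ l) :
    YwordN Γ Y l k =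
      ∑ i ∈ Finset.range (k + 1), YwordN Γ Y (m - 1) i * Y * YwordN Γ Y (l - m) (k - i) := by
  induction m generalizing l k with
  | zero => omega
  | succ m ih =>
    cases m with
    | zero =>
      obtain ⟨l', rfl⟩ : ∃ l', l = l' + 1 := ⟨l - 1, by omega⟩
      simpa using Ysplit1 Γ Y l' k
    | succ m =>
      obtain ⟨l', rfl⟩ : ∃ l', l = l' + 1 := ⟨l - 1, by omega⟩
      have hml' : m + 1 ≤ l' := by omega
      simp only [Nat.add_sub_cancel, Nat.succ_sub_succ, Nat.sub_zero]
      induction k with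
      | zero =>
        simp only [zero_add, Finset.sum_range_one, Nat.sub_self, Nat.sub_zero, Yl0]
        rw [← pow_succ, ← pow_add]
        congr 1
        omega
      | succ k ihk =>
        have h1 : YwordN Γ Y l' (k+1) =
            ∑ i ∈ Finset.range (k+1+1), YwordN Γ Y m i * Y * YwordN Γ Y (l' - (m+1)) (k+1-i) := by
          simpa using ih l' (k+1) (by omega) (by omega)
        calc YwordN Γ Y (l'+1) (k+1)
            = Γ * YwordN Γ Y (l'+1) k + Y * YwordN Γ Y l' (k+1) := Yrec Γ Y l' k
          _ = Γ * ∑ i ∈ Finset.range (k+1),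
                YwordN Γ Y (m+1) i * Y * YwordN Γ Y (l' - (m+1)) (k-i)
              + Y * ∑ i ∈ Finset.range (k+1+1),
                YwordN Γ Y m i * Y * YwordN Γ Y (l' - (m+1)) (k+1-i) := by rw [ihk, h1]
          _ = ∑ i ∈ Finset.range (k+1),
                Γ * (YwordN Γ Y (m+1) i * Y * YwordN Γ Y (l' - (m+1)) (k-i))
              + (∑ i ∈ Finset.range (k+1),
                  Y * (YwordN Γ Y m (i+1) * Y * YwordN Γ Y (l' - (m+1)) (k-i))
                + Y * (YwordN Γ Y m 0 * Y * YwordN Γ Y (l' - (m+1)) (k+1))) := by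
              rw [Finset.sum_range_succ' (fun i => YwordN Γ Y m i * Y *
                    YwordN Γ Y (l' - (m+1)) (k+1-i)) (k+1)]
              simp only [Nat.succ_sub_succ, Nat.sub_zero, mul_add, Finset.mul_sum]
          _ = ∑ i ∈ Finset.range (k+1),
                YwordN Γ Y (m+1) (i+1) * Y * YwordN Γ Y (l' - (m+1)) (k-i)
              + YwordN Γ Y (m+1) 0 * Y * YwordN Γ Y (l' - (m+1)) (k+1) := by
              rw [← add_assoc, ← Finset.sum_add_distrib]
              simp only [Yrec, YrecL, add_mul, mul_assoc]
          _ = ∑ i ∈ Finset.range (k+1+1),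
                YwordN Γ Y (m+1) i * Y * YwordN Γ Y (l' - (m+1)) (k+1-i) := by
              rw [Finset.sum_range_succ' (fun i => YwordN Γ Y (m+1) i * Y *
                    YwordN Γ Y (l' - (m+1)) (k+1-i)) (k+1)]
              simp only [Nat.succ_sub_succ, Nat.sub_zero]


/-- For `1 ≤ m ≤ ℓ`:
`Y_{ℓ,k} = ∑_{i=0}^{k} Y_{m−1,i} · Y · Y_{ℓ−m, k−i}`
(expansion according to the position of the `m`-th occurrence of `Y`). -/
theorem Yword_split_at_mth_Y {R : Type*} [Ring R] (Γ Y : R) (l k m : ℕ)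
    (hm1 : 1 ≤ m) (hml : m ≤ l) :
    YwordN Γ Y l k =
      ∑ i ∈ Finset.range (k + 1), YwordN Γ Y (m - 1) i * Y * YwordN Γ Y (l - m) (k - i) :=
  Yword_split_aux Γ Y l k m hm1 hml
end
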